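/- Let X be a Banach space whose dual unit ball (B_{X*}, w*) admits a regular Borel probability measure μ such that L¹(μ) is non-separable, let i : X → C(B_{X*}) be the canonical embedding and S := u ∘ i where u : C(B_{X*}) → L¹(μ) is the formal inclusion. Then S(B_X) is non-separable in L¹(μ). -/

import Mathlib

set_option maxHeartbeats 1000000

open MeasureTheory NormedSpace TopologicalSpace

variable (X : Type*) [NormedAddCommGroup X] [NormedSpace ℝ X]

/-- The closed unit ball of the dual of `X`, equipped with the weak* topology
(a compact space, by the Banach–Alaoglu theorem). -/
def dualBall : Set (WeakDual ℝ X) :=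
  WeakDual.toStrongDual ⁻¹' Metric.closedBall (0 : StrongDual ℝ X) 1

instance : CompactSpace (dualBall X) :=
  isCompact_iff_compactSpace.mp (WeakDual.isCompact_closedBall (𝕜 := ℝ) (E := X) 0 1)

noncomputable instance : MeasurableSpace (dualBall X) := borel _

instance : BorelSpace (dualBall X) := ⟨rfl⟩

/-- The canonical embedding `i : X → C(B_{X*})`, `i(x)(x*) = x*(x)`. -/
noncomputable def canonicalEmbeddingCK (x : X) : C(dualBall X, ℝ) :=
  ContinuousMap.mk (fun φ : dualBall X => (φ : WeakDual ℝ X) x)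
    ((WeakDual.eval_continuous x).comp continuous_subtype_val)

instance : Nonempty (dualBall X) :=
  ⟨⟨0, by simp [dualBall]⟩⟩

lemma canonicalEmbeddingCK_apply (x : X) (φ : dualBall X) :
    canonicalEmbeddingCK X x φ = (φ : WeakDual ℝ X) x := rfl

lemma norm_canonicalEmbeddingCK_le (x : X) : ‖canonicalEmbeddingCK X x‖ ≤ ‖x‖ := by
  refine (ContinuousMap.norm_le _ (norm_nonneg x)).mpr fun φ => ?_
  have hφ : ‖WeakDual.toStrongDual (φ : WeakDual ℝ X)‖ ≤ 1 :=
    mem_closedBall_zero_iff.mp φ.2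
  calc ‖canonicalEmbeddingCK X x φ‖
      = ‖WeakDual.toStrongDual (φ : WeakDual ℝ X) x‖ := rfl
    _ ≤ ‖WeakDual.toStrongDual (φ : WeakDual ℝ X)‖ * ‖x‖ :=
        (WeakDual.toStrongDual (φ : WeakDual ℝ X)).le_opNorm x
    _ ≤ 1 * ‖x‖ := by gcongr
    _ = ‖x‖ := one_mul _

/-- Let `X` be a Banach space whose dual unit ball `(B_{X*}, w*)`
carries a regular Borel probability measure `μ` such that `L¹(μ)` is non-separable.
Let `i : X → C(B_{X*})` be the canonical embedding and `S := u ∘ i`, where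
`u : C(B_{X*}) → L¹(μ)` is the formal inclusion. Then `S(B_X)` is non-separable
in `L¹(μ)`. -/
theorem nonseparable_image_ball_in_L1 [CompleteSpace X]
    (μ : Measure (dualBall X)) [IsProbabilityMeasure μ] [μ.Regular]
    (hL1 : ¬ SeparableSpace (Lp ℝ 1 μ)) :
    ¬ IsSeparable
      ((fun x : X => ContinuousMap.toLp 1 μ ℝ (canonicalEmbeddingCK X x)) ''
        Metric.closedBall (0 : X) 1) := by
  intro hsep
  apply hL1
  set i : X → C(dualBall X, ℝ) := canonicalEmbeddingCK X with hi
  set u : C(dualBall X, ℝ) →L[ℝ] Lp ℝ 1 μ := ContinuousMap.toLp 1 μ ℝ with hu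
  -- monotonicity of the `L¹` norm of `u f` with respect to pointwise domination
  have umono : ∀ f g : C(dualBall X, ℝ), (∀ z, |f z| ≤ |g z|) → ‖u f‖ ≤ ‖u g‖ := by
    intro f g h
    have hfc : (u f : dualBall X →ₘ[μ] ℝ) =ᵐ[μ] ⇑f := ContinuousMap.coeFn_toLp μ f
    have hgc : (u g : dualBall X →ₘ[μ] ℝ) =ᵐ[μ] ⇑g := ContinuousMap.coeFn_toLp μ g
    rw [Lp.norm_def, Lp.norm_def, eLpNorm_congr_ae hfc, eLpNorm_congr_ae hgc]
    have h1 : eLpNorm (⇑f) 1 μ ≤ eLpNorm (⇑g) 1 μ :=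
      eLpNorm_mono fun z => by simpa [Real.norm_eq_abs] using h z
    have hg : eLpNorm (⇑g) 1 μ ≠ ⊤ := by
      rw [← eLpNorm_congr_ae hgc]; exact Lp.eLpNorm_ne_top (u g)
    exact ENNReal.toReal_mono hg h1
  -- extraction of a countable set `Y` in the unit ball of `X`
  obtain ⟨T, hTsub, hTcount, hTdense⟩ := hsep.exists_countable_dense_subset
  have hT' : ∀ t : T, ∃ y, y ∈ Metric.closedBall (0 : X) 1 ∧
      ContinuousMap.toLp 1 μ ℝ (canonicalEmbeddingCK X y) = (t : Lp ℝ 1 μ) := by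
    intro t
    obtain ⟨y, hy, hyt⟩ := hTsub t.2
    exact ⟨y, hy, hyt⟩
  choose yf hyf1 hyf2 using hT'
  haveI := hTcount.to_subtype
  -- the countable set of monomials in elements of `i ∘ yf`
  set MY : Set C(dualBall X, ℝ) :=
    Set.range (fun l : List T => (l.map fun t => i (yf t)).prod) with hMY
  have hMYcount : MY.Countable := Set.countable_range _
  have hone_mem : (1 : C(dualBall X, ℝ)) ∈ MY := ⟨[], by simp⟩
  have hMY_mul : ∀ g g' : C(dualBall X, ℝ), g ∈ MY → g' ∈ MY → g * g' ∈ MY := by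
    rintro - - ⟨l, rfl⟩ ⟨l', rfl⟩
    exact ⟨l ++ l', by simp⟩
  -- the candidate separable closed subspace
  set V : Submodule ℝ (Lp ℝ 1 μ) := (Submodule.span ℝ (u '' MY)).topologicalClosure with hV
  have hVsep : IsSeparable (V : Set (Lp ℝ 1 μ)) := by
    have h1 : IsSeparable (u '' MY) := (hMYcount.image u).isSeparable
    have h2 := h1.span (R := ℝ)
    rw [hV, Submodule.topologicalClosure_coe]
    exact h2.closure
  have hVclosed : IsClosed (V : Set (Lp ℝ 1 μ)) := Submodule.isClosed_topologicalClosure _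
  -- key approximation: every monomial in elements of the ball is approximated by `MY` in `L¹`
  have key : ∀ m ∈ Submonoid.closure (i '' Metric.closedBall (0 : X) 1),
      ‖m‖ ≤ 1 ∧ ∀ ε : ℝ, 0 < ε → ∃ g ∈ MY, ‖g‖ ≤ 1 ∧ ‖u m - u g‖ ≤ ε := by
    intro m hm
    induction hm using Submonoid.closure_induction with
    | mem f hf =>
      obtain ⟨x, hx, rfl⟩ := hf
      have hnorm : ‖i x‖ ≤ 1 :=
        (norm_canonicalEmbeddingCK_le X x).trans (by simpa using hx)
      refine ⟨hnorm, fun ε hε => ?_⟩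
      have hmem : u (i x) ∈ closure T := hTdense ⟨x, hx, rfl⟩
      obtain ⟨t, htT, hdist⟩ := Metric.mem_closure_iff.mp hmem ε hε
      refine ⟨i (yf ⟨t, htT⟩), ⟨[⟨t, htT⟩], by simp⟩, ?_, ?_⟩
      · exact (norm_canonicalEmbeddingCK_le X _).trans (by simpa using hyf1 ⟨t, htT⟩)
      · have heq : u (i (yf ⟨t, htT⟩)) = t := hyf2 ⟨t, htT⟩
        rw [heq]
        exact le_of_lt (by simpa [dist_eq_norm] using hdist)
    | one =>
      refine ⟨le_of_eq norm_one, fun ε hε => ⟨1, hone_mem, le_of_eq norm_one, ?_⟩⟩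
      simpa using hε.le
    | mul m m' hmmem hm'mem ihm ihm' =>
      obtain ⟨hm1, hm2⟩ := ihm
      obtain ⟨hm'1, hm'2⟩ := ihm'
      refine ⟨(norm_mul_le m m').trans (by nlinarith [norm_nonneg m]), fun ε hε => ?_⟩
      obtain ⟨g, hgMY, hg1, hg2⟩ := hm2 (ε / 2) (by linarith)
      obtain ⟨g', hg'MY, hg'1, hg'2⟩ := hm'2 (ε / 2) (by linarith)
      refine ⟨g * g', hMY_mul g g' hgMY hg'MY,
        (norm_mul_le g g').trans (by nlinarith [norm_nonneg g]), ?_⟩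
      have hsplit : m * m' - g * g' = m * (m' - g') + (m - g) * g' := by ring
      have e1 : ‖u (m * (m' - g'))‖ ≤ ‖u (m' - g')‖ := by
        refine umono _ _ fun z => ?_
        have h1 : |m z| ≤ 1 := by
          have := ContinuousMap.norm_coe_le_norm m z
          rw [Real.norm_eq_abs] at this
          exact this.trans hm1
        calc |(m * (m' - g')) z| = |m z| * |(m' - g') z| := by
              simp [abs_mul]
          _ ≤ 1 * |(m' - g') z| := mul_le_mul_of_nonneg_right h1 (abs_nonneg _)
          _ = |(m' - g') z| := one_mul _
      have e2 : ‖u ((m - g) * g')‖ ≤ ‖u (m - g)‖ := by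
        refine umono _ _ fun z => ?_
        have h1 : |g' z| ≤ 1 := by
          have := ContinuousMap.norm_coe_le_norm g' z
          rw [Real.norm_eq_abs] at this
          exact this.trans hg'1
        calc |((m - g) * g') z| = |(m - g) z| * |g' z| := by
              simp [abs_mul]
          _ ≤ |(m - g) z| * 1 := mul_le_mul_of_nonneg_left h1 (abs_nonneg _)
          _ = |(m - g) z| := mul_one _
      calc ‖u (m * m') - u (g * g')‖ = ‖u (m * m' - g * g')‖ := by rw [map_sub]
        _ = ‖u (m * (m' - g') + (m - g) * g')‖ := by rw [hsplit]
        _ ≤ ‖u (m * (m' - g'))‖ + ‖u ((m - g) * g')‖ := by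
              rw [map_add]; exact norm_add_le _ _
        _ ≤ ‖u (m' - g')‖ + ‖u (m - g)‖ := add_le_add e1 e2
        _ = ‖u m' - u g'‖ + ‖u m - u g‖ := by rw [map_sub, map_sub]
        _ ≤ ε / 2 + ε / 2 := add_le_add hg'2 hg2
        _ = ε := by ring
  -- every monomial maps into `V`
  have hclosV : ∀ m ∈ Submonoid.closure (i '' Metric.closedBall (0 : X) 1), u m ∈ V := by
    intro m hm
    obtain ⟨-, happrox⟩ := key m hm
    have hmemcl : u m ∈ closure (u '' MY) := by
      refine Metric.mem_closure_iff.mpr fun ε hε => ?_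
      obtain ⟨g, hg, -, hd⟩ := happrox (ε / 2) (by linarith)
      exact ⟨u g, Set.mem_image_of_mem u hg, by rw [dist_eq_norm]; linarith⟩
    have h2 : u m ∈ closure ((Submodule.span ℝ (u '' MY) : Submodule ℝ _) :
        Set (Lp ℝ 1 μ)) := closure_mono Submodule.subset_span hmemcl
    rw [hV]
    rwa [← Submodule.topologicalClosure_coe] at h2
  -- the Stone–Weierstrass subalgebra
  set A : Subalgebra ℝ C(dualBall X, ℝ) :=
    Algebra.adjoin ℝ (i '' Metric.closedBall (0 : X) 1) with hA
  have hAsep : A.SeparatesPoints := by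
    intro φ ψ hne
    have hval : (φ : WeakDual ℝ X) ≠ (ψ : WeakDual ℝ X) := fun h => hne (Subtype.ext h)
    obtain ⟨x, hx⟩ := DFunLike.ne_iff.mp hval
    set c : ℝ := (‖x‖ + 1)⁻¹ with hc
    have hcpos : 0 < c := by positivity
    have hball : c • x ∈ Metric.closedBall (0 : X) 1 := by
      simp only [Metric.mem_closedBall, dist_zero_right, norm_smul, Real.norm_eq_abs]
      rw [abs_of_pos hcpos, hc, inv_mul_le_iff₀ (by positivity)]
      linarith
    refine ⟨⇑(i (c • x)),
      ⟨i (c • x), Algebra.subset_adjoin (Set.mem_image_of_mem _ hball), rfl⟩, ?_⟩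
    show (φ : WeakDual ℝ X) (c • x) ≠ (ψ : WeakDual ℝ X) (c • x)
    simp only [_root_.map_smul, smul_eq_mul]
    exact fun h => hx (mul_left_cancel₀ (ne_of_gt hcpos) h)
  have hAtop := ContinuousMap.subalgebra_topologicalClosure_eq_top_of_separatesPoints A hAsep
  -- `u` maps `A` into `V`
  have hAV : ∀ f ∈ A, u f ∈ V := by
    intro f hf
    have hf' : f ∈ Submodule.span ℝ
        ((Submonoid.closure (i '' Metric.closedBall (0 : X) 1) : Submonoid _) :
          Set C(dualBall X, ℝ)) := by
      have : f ∈ Subalgebra.toSubmodule A := hf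
      rwa [hA, Algebra.adjoin_eq_span] at this
    clear hf
    induction hf' using Submodule.span_induction with
    | mem g hg => exact hclosV g hg
    | zero => simp only [map_zero]; exact V.zero_mem
    | add a b _ _ ha hb => rw [map_add]; exact V.add_mem ha hb
    | smul c a _ ha => rw [_root_.map_smul]; exact V.smul_mem c ha
  -- `u` maps everything into `V`, by Stone–Weierstrass and continuity
  have hrange : ∀ f : C(dualBall X, ℝ), u f ∈ V := by
    intro f
    have hfA : f ∈ closure (A : Set C(dualBall X, ℝ)) := by
      have hmem : f ∈ (A.topologicalClosure : Set C(dualBall X, ℝ)) := by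
        rw [hAtop]; trivial
      rwa [Subalgebra.topologicalClosure_coe] at hmem
    have h1 : u f ∈ closure (u '' (A : Set C(dualBall X, ℝ))) :=
      image_closure_subset_closure_image u.continuous ⟨f, hfA, rfl⟩
    have hsub : closure (u '' (A : Set C(dualBall X, ℝ))) ⊆ (V : Set (Lp ℝ 1 μ)) := by
      rw [← hVclosed.closure_eq]
      refine closure_mono ?_
      rintro - ⟨g, hg, rfl⟩
      exact hAV g hg
    exact hsub h1
  -- `V` is all of `L¹`, hence `L¹` is separable
  have huniv : (V : Set (Lp ℝ 1 μ)) = Set.univ := by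
    have hdense : DenseRange u := ContinuousMap.toLp_denseRange ℝ μ ℝ (by norm_num)
    apply Set.eq_univ_of_univ_subset
    have hsub : closure (Set.range ⇑u) ⊆ (V : Set (Lp ℝ 1 μ)) := by
      rw [← hVclosed.closure_eq]
      refine closure_mono ?_
      rintro - ⟨f, rfl⟩
      exact hrange f
    rw [← hdense.closure_range]
    exact hsub
  have : IsSeparable (Set.univ : Set (Lp ℝ 1 μ)) := huniv ▸ hVsep
  exact isSeparable_univ_iff.mp this
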